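/- Let m = 2. For integers s, i with max{0, 2i−n_1} ≤ s < i ≤ n_1−2, let Δ := ({0,…,i} × {0,…,n_2−2}) ∪ ({0,…,s} × {n_2−1}) ⊆ E. Then the monomial-Cartesian code C_Δ^P is an optimal (r,δ)-LRC with (r,δ) = (i+1, n_1−i), dimension k = (i+1)(n_2−1)+s+1 and minimum distance d = n_1−s. Symmetrically, for max{0, 2j−n_2} ≤ s < j ≤ n_2−2 and Δ := ({0,…,n_1−2} × {0,…,j}) ∪ ({n_1−1} × {0,…,s}), the code C_Δ^P is an optimal (j+1, n_2−j)-LRC with k = (j+1)(n_1−1)+s+1 and d = n_2−s. -/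

import Mathlib

/-- The set of evaluation points `P = P₁ × ⋯ × P_m`. -/
abbrev MCCPt {F : Type*} {m : ℕ} (P : Fin m → Finset F) : Type _ :=
  (j : Fin m) → {x // x ∈ P j}

/-- The evaluation vector of the monomial `X^e` at the points of `P`. -/
def evMon {F : Type*} [Field F] {m : ℕ} (P : Fin m → Finset F) (e : Fin m → ℕ) :
    MCCPt P → F :=
  fun x => ∏ j, (x j : F) ^ e j

/-- The monomial-Cartesian code `C_Δ^P = ev_P(V_Δ)`. -/
def MCC {F : Type*} [Field F] {m : ℕ} (P : Fin m → Finset F) (Δ : Finset (Fin m → ℕ)) :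
    Submodule F (MCCPt P → F) :=
  Submodule.span F (evMon P '' ↑Δ)

/-- The code `C ⊆ F^ι` has minimum Hamming distance exactly `d`. -/
def HasMinDist {F ι : Type*} [Field F] [DecidableEq F] [Fintype ι]
    (C : Submodule F (ι → F)) (d : ℕ) : Prop :=
  (∀ c ∈ C, c ≠ 0 → d ≤ hammingNorm c) ∧ ∃ c ∈ C, c ≠ 0 ∧ hammingNorm c = d

/-- The code `C ⊆ F^ι` is an `(r, δ)`-locally recoverable code. -/
def IsLRC {F ι : Type*} [Field F] [DecidableEq F] [DecidableEq ι] [Fintype ι]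
    (C : Submodule F (ι → F)) (r δ : ℕ) : Prop :=
  ∀ i : ι, ∃ R : Finset ι, i ∈ R ∧ R.card ≤ r + δ - 1 ∧
    ∀ c ∈ C, (∃ j ∈ R, c j ≠ 0) → δ ≤ (R.filter fun j => c j ≠ 0).card

/-- `C` is an optimal `(r, δ)`-LRC with dimension `k` and minimum distance `d`:
it is an `(r, δ)`-LRC attaining the Singleton-like bound
`k + d + (⌈k/r⌉ - 1)(δ - 1) = n + 1`. -/
def IsOptimalLRC {F ι : Type*} [Field F] [DecidableEq F] [DecidableEq ι] [Fintype ι]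
    (C : Submodule F (ι → F)) (k d r δ : ℕ) : Prop :=
  IsLRC C r δ ∧ Module.finrank F C = k ∧ HasMinDist C d ∧
    k + d + ((k + r - 1) / r - 1) * (δ - 1) = Fintype.card ι + 1

/-- The set `Δ²_{i,s} = ({0,…,i} × {0,…,n₂-2}) ∪ ({0,…,s} × {n₂-1})`. -/
def Δ2 (i s n2 : ℕ) : Finset (Fin 2 → ℕ) :=
  ((Finset.range (i + 1) ×ˢ Finset.range (n2 - 1)).image fun p => ![p.1, p.2]) ∪
    ((Finset.range (s + 1) ×ˢ {n2 - 1}).image fun p => ![p.1, p.2])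

/-- The symmetric set `Δ²σ_{j,s} = ({0,…,n₁-2} × {0,…,j}) ∪ ({n₁-1} × {0,…,s})`. -/
def Δ2σ (j s n1 : ℕ) : Finset (Fin 2 → ℕ) :=
  ((Finset.range (n1 - 1) ×ˢ Finset.range (j + 1)).image fun p => ![p.1, p.2]) ∪
    (({n1 - 1} ×ˢ Finset.range (s + 1)).image fun p => ![p.1, p.2])



open Finset Polynomial

namespace MCCAux
set_option linter.unusedSectionVars false
set_option maxHeartbeats 1000000

variable {F : Type*} [Field F] [DecidableEq F]



/-- polynomial from coefficient function -/
noncomputable def pfun (g : ℕ → F) (n : ℕ) : F[X] := ∑ a ∈ Finset.range n, C (g a) * X ^ a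

lemma pfun_eval (g : ℕ → F) (n : ℕ) (x : F) :
    (pfun g n).eval x = ∑ a ∈ Finset.range n, g a * x ^ a := by
  simp [pfun, eval_finset_sum]

lemma pfun_coeff (g : ℕ → F) {n a : ℕ} (h : a < n) : (pfun g n).coeff a = g a := by
  simp only [pfun, finset_sum_coeff, coeff_C_mul, coeff_X_pow, mul_ite, mul_one, mul_zero]
  rw [Finset.sum_ite_eq (Finset.range n) a g]
  simp [h]

lemma pfun_natDegree_le (g : ℕ → F) (n : ℕ) : (pfun g n).natDegree ≤ n - 1 := by
  apply Polynomial.natDegree_sum_le_of_forall_le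
  intro a ha
  refine le_trans (natDegree_C_mul_le _ _) ?_
  rw [natDegree_X_pow]
  have := Finset.mem_range.mp ha
  omega

lemma pfun_shrink (g : ℕ → F) {m n : ℕ} (hmn : m ≤ n) (h : ∀ a, m ≤ a → g a = 0) :
    pfun g n = pfun g m := by
  rw [pfun, pfun, ← Finset.sum_subset (Finset.range_subset_range.mpr hmn)]
  intro a ha hna
  rw [h a (by simpa using hna)]
  simp

lemma pfun_eq_zero_of_eval (g : ℕ → F) (n : ℕ) (S : Finset F) (hn : n ≤ S.card)
    (h : ∀ x ∈ S, (pfun g n).eval x = 0) : ∀ a < n, g a = 0 := by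
  intro a ha
  have hp : pfun g n = 0 := by
    apply Polynomial.eq_zero_of_natDegree_lt_card_of_eval_eq_zero' _ S h
    exact lt_of_le_of_lt (pfun_natDegree_le g n) (by omega)
  rw [← pfun_coeff g ha, hp, coeff_zero]

lemma card_filter_eval_zero_le (p : F[X]) (hp : p ≠ 0) (S : Finset F) :
    ((S.filter fun x => p.eval x = 0)).card ≤ p.natDegree := by
  calc (S.filter fun x => p.eval x = 0).card ≤ p.roots.toFinset.card := by
        apply Finset.card_le_card
        intro x hx
        simp only [Finset.mem_filter] at hx
        simp [Multiset.mem_toFinset, mem_roots hp, IsRoot.def, hx.2]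
    _ ≤ Multiset.card p.roots := Multiset.toFinset_card_le _
    _ ≤ p.natDegree := Polynomial.card_roots' p

lemma card_filter_eval_ne_zero (p : F[X]) (hp : p ≠ 0) (S : Finset F) :
    S.card - p.natDegree ≤ (S.filter fun x => p.eval x ≠ 0).card := by
  have h1 : (S.filter fun x => p.eval x = 0).card
      + (S.filter fun x => ¬ p.eval x = 0).card = S.card :=
    Finset.card_filter_add_card_filter_not (fun x => p.eval x = 0)
  have h2 := card_filter_eval_zero_le p hp S
  show S.card - p.natDegree ≤ (S.filter fun x => ¬ p.eval x = 0).card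
  omega

/-- membership in span of image of a finset -/
lemma mem_span_image_iff {α M : Type*} [DecidableEq α] [AddCommGroup M] [Module F M]
    (f : α → M) (Δ : Finset α) (c : M) :
    c ∈ Submodule.span F (f '' ↑Δ) ↔ ∃ G : α → F, c = ∑ p ∈ Δ, G p • f p := by
  constructor
  · intro hc
    have himg : f '' ↑Δ = Set.range (fun x : ↥Δ => f ↑x) := by
      ext y; simp [Set.mem_range, Subtype.exists]
    rw [himg, ← Fintype.range_linearCombination F (fun x : ↥Δ => f ↑x)] at hc
    obtain ⟨g, hg⟩ := hc
    refine ⟨fun p => if h : p ∈ Δ then g ⟨p, h⟩ else 0, ?_⟩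
    rw [← hg, Fintype.linearCombination_apply, Finset.univ_eq_attach,
      ← Finset.sum_attach Δ (fun p => (if h : p ∈ Δ then g ⟨p, h⟩ else 0) • f p)]
    apply Finset.sum_congr rfl
    intro p _
    rw [dif_pos p.2]
  · rintro ⟨G, rfl⟩
    exact Submodule.sum_mem _ fun p hp => Submodule.smul_mem _ _
      (Submodule.subset_span ⟨p, hp, rfl⟩)

abbrev Pt (A B : Finset F) : Type _ := {x // x ∈ A} × {x // x ∈ B}

def ev (A B : Finset F) (p : ℕ × ℕ) : Pt A B → F := fun z => (z.1 : F) ^ p.1 * (z.2 : F) ^ p.2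

def C2 (A B : Finset F) (Δ : Finset (ℕ × ℕ)) : Submodule F (Pt A B → F) :=
  Submodule.span F (ev A B '' ↑Δ)

def Δc (i s nB : ℕ) : Finset (ℕ × ℕ) :=
  Finset.range (i+1) ×ˢ Finset.range (nB - 1) ∪ Finset.range (s+1) ×ˢ {nB - 1}

lemma card_filter_subtype (A : Finset F) (p : F → Prop) [DecidablePred p] :
    (Finset.univ.filter fun x : {x // x ∈ A} => p ↑x).card = (A.filter p).card := by
  refine Finset.card_bij' (fun x _ => (↑x : F)) (fun b hb => ⟨b, (Finset.mem_filter.mp hb).1⟩)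
    ?_ ?_ ?_ ?_
  · intro a ha; rw [Finset.mem_filter] at ha ⊢; exact ⟨a.2, ha.2⟩
  · intro b hb; rw [Finset.mem_filter] at hb ⊢; exact ⟨Finset.mem_univ _, hb.2⟩
  · intro a _; rfl
  · intro b _; rfl

lemma card_filter_prod (A B : Finset F) (q : Pt A B → Prop) [DecidablePred q] :
    (Finset.univ.filter q).card
      = ∑ x : {x // x ∈ A}, (Finset.univ.filter fun y : {y // y ∈ B} => q (x, y)).card := by
  rw [Finset.card_filter, ← Finset.univ_product_univ, Finset.sum_product]
  exact Finset.sum_congr rfl fun x _ => (Finset.card_filter _ _).symm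

lemma hammingNorm_eq {ι : Type*} [Fintype ι] [DecidableEq ι] (c : ι → F) :
    hammingNorm c = (Finset.univ.filter fun z => c z ≠ 0).card := rfl

lemma sum_ev_eq (A B : Finset F) (Δ : Finset (ℕ × ℕ))
    (hΔ : Δ ⊆ Finset.range A.card ×ˢ Finset.range B.card)
    (G : ℕ × ℕ → F) (hG : ∀ p, G p ≠ 0 → p ∈ Δ) (z : Pt A B) :
    (∑ p ∈ Δ, G p • ev A B p) z
      = ∑ b ∈ Finset.range B.card,
          (pfun (fun a => G (a, b)) A.card).eval ↑z.1 * (↑z.2 : F) ^ b := by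
  have h1 : (∑ p ∈ Δ, G p • ev A B p) z = ∑ p ∈ Δ, G p * ((↑z.1:F) ^ p.1 * (↑z.2:F) ^ p.2) := by
    simp [ev]
  rw [h1, Finset.sum_subset hΔ (by
    intro p _ hp
    rw [of_not_not (fun h => hp (hG p h))]
    simp)]
  rw [Finset.sum_product_right]
  apply Finset.sum_congr rfl
  intro b _
  rw [pfun_eval, Finset.sum_mul]
  apply Finset.sum_congr rfl
  intro a _
  ring

lemma mem_C2_iff (A B : Finset F) (Δ : Finset (ℕ × ℕ))
    (hΔ : Δ ⊆ Finset.range A.card ×ˢ Finset.range B.card) (c : Pt A B → F) :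
    c ∈ C2 A B Δ ↔ ∃ G : ℕ × ℕ → F, (∀ p, G p ≠ 0 → p ∈ Δ) ∧
      ∀ z : Pt A B, c z = ∑ b ∈ Finset.range B.card,
        (pfun (fun a => G (a, b)) A.card).eval ↑z.1 * (↑z.2 : F) ^ b := by
  have key : ∀ G : ℕ × ℕ → F, (∀ p, G p ≠ 0 → p ∈ Δ) → ∀ z : Pt A B,
      (∑ p ∈ Δ, G p • ev A B p) z
        = ∑ b ∈ Finset.range B.card,
          (pfun (fun a => G (a, b)) A.card).eval ↑z.1 * (↑z.2 : F) ^ b :=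
    fun G hG z => sum_ev_eq A B Δ hΔ G hG z
  rw [C2, mem_span_image_iff]
  constructor
  · rintro ⟨G₀, rfl⟩
    refine ⟨fun p => if p ∈ Δ then G₀ p else 0, fun p hp => by by_contra h; simp [h] at hp, ?_⟩
    intro z
    rw [show (∑ p ∈ Δ, G₀ p • ev A B p) = ∑ p ∈ Δ, (if p ∈ Δ then G₀ p else 0) • ev A B p from
      Finset.sum_congr rfl fun p hp => by rw [if_pos hp]]
    exact key _ (fun p hp => by by_contra h; simp [h] at hp) z
  · rintro ⟨G, hG, hc⟩
    refine ⟨G, funext fun z => ?_⟩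
    rw [hc z, key G hG z]

section Core

variable (A B : Finset F) (i s : ℕ)

lemma mem_Δc_iff (nB : ℕ) (p : ℕ × ℕ) :
    p ∈ Δc i s nB ↔ (p.1 ≤ i ∧ p.2 < nB - 1) ∨ (p.1 ≤ s ∧ p.2 = nB - 1) := by
  rw [Δc, Finset.mem_union, Finset.mem_product, Finset.mem_product, Finset.mem_range,
    Finset.mem_range, Finset.mem_range, Finset.mem_singleton]
  omega

lemma Δc_subset (hA : i + 2 ≤ A.card) (hB : 2 ≤ B.card) (hsi : s < i) :
    Δc i s B.card ⊆ Finset.range A.card ×ˢ Finset.range B.card := by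
  intro p hp
  rw [mem_Δc_iff] at hp
  rw [Finset.mem_product, Finset.mem_range, Finset.mem_range]
  omega

variable (hA : 2 ≤ A.card) (hB : 2 ≤ B.card)
  (hs : 2 * i - A.card ≤ s) (hsi : s < i) (hi : i ≤ A.card - 2)

include hA hB hs hsi hi

lemma dist_lb (c : Pt A B → F) (hc : c ∈ C2 A B (Δc i s B.card)) (hc0 : c ≠ 0) :
    A.card - s ≤ hammingNorm c := by
  have hsub := Δc_subset A B i s (by omega) hB hsi
  obtain ⟨G, hG, hrep⟩ := (mem_C2_iff A B _ hsub c).mp hc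
  set nA := A.card with hnA
  set nB := B.card with hnB
  set Q : ℕ → F[X] := fun b => pfun (fun a => G (a, b)) nA with hQ
  -- support facts
  have hItop : ∀ a b, i < a → G (a, b) = 0 := by
    intro a b h
    by_contra hne
    have := (mem_Δc_iff i s nB _).mp (hG _ hne)
    simp at this; omega
  have hStop : ∀ a, s < a → G (a, nB - 1) = 0 := by
    intro a h
    by_contra hne
    have := (mem_Δc_iff i s nB _).mp (hG _ hne)
    simp at this; omega
  -- column polynomial
  have hcol : ∀ x : {x // x ∈ A}, ∀ y : {y // y ∈ B},
      c (x, y) = (pfun (fun b => (Q b).eval ↑x) nB).eval ↑y := by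
    intro x y
    rw [pfun_eval, hrep (x, y)]
  -- the norm as a column sum
  have hnorm : hammingNorm c
      = ∑ x : {x // x ∈ A}, (Finset.univ.filter fun y : {y // y ∈ B} => c (x, y) ≠ 0).card := by
    rw [hammingNorm_eq, card_filter_prod]
  by_cases hQtop : Q (nB - 1) = 0
  · -- case 2 : top row zero, some other row nonzero
    have hex : ∃ b, b < nB - 1 ∧ Q b ≠ 0 := by
      by_contra hall
      push_neg at hall
      apply hc0
      funext z
      have : ∀ b ∈ Finset.range nB, (Q b).eval ↑z.1 * (↑z.2 : F) ^ b = 0 := by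
        intro b hb
        rcases Nat.lt_or_ge b (nB - 1) with h | h
        · rw [hall b h]; simp
        · have : b = nB - 1 := by rw [Finset.mem_range] at hb; omega
          rw [this, hQtop]; simp
      rw [hrep z, Finset.sum_eq_zero this]; rfl
    obtain ⟨b₀, hb₀, hQb₀⟩ := hex
    set T := Finset.univ.filter fun x : {x // x ∈ A} => (Q b₀).eval ↑x ≠ 0 with hT
    have hTcard : nA - i ≤ T.card := by
      rw [hT, card_filter_subtype A (fun u => (Q b₀).eval u ≠ 0)]
      have hdeg : (Q b₀).natDegree ≤ i := by
        show (pfun (fun a => G (a, b₀)) nA).natDegree ≤ i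
        rw [pfun_shrink (fun a => G (a, b₀)) (by omega : i + 1 ≤ nA)
          (fun a ha => hItop a b₀ (by omega))]
        exact le_trans (pfun_natDegree_le _ _) (by omega)
      have := card_filter_eval_ne_zero (Q b₀) hQb₀ A
      omega
    have hcol2 : ∀ x ∈ T, 2 ≤ (Finset.univ.filter fun y : {y // y ∈ B} => c (x, y) ≠ 0).card := by
      intro x hx
      rw [hT, Finset.mem_filter] at hx
      set R := pfun (fun b => (Q b).eval ↑x) nB with hR
      have hR0 : R ≠ 0 := fun h => hx.2 (by
        have := pfun_coeff (fun b => (Q b).eval (↑x : F)) (show b₀ < nB by omega)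
        rw [← hR, h, coeff_zero] at this; exact this.symm)
      have hRdeg : R.natDegree ≤ nB - 2 := by
        rw [hR, pfun_shrink (fun b => (Q b).eval ↑x) (by omega : nB - 1 ≤ nB)
          (fun b hb => ?_)]
        · exact le_trans (pfun_natDegree_le _ _) (by omega)
        · show (Q b).eval ↑x = 0
          rcases Nat.eq_or_lt_of_le hb with h | h
          · rw [← h, hQtop]; simp
          · have hQb : Q b = 0 := by
              show pfun (fun a => G (a, b)) nA = 0
              have : ∀ a, G (a, b) = 0 := by
                intro a
                by_contra hne
                have := (mem_Δc_iff i s nB _).mp (hG _ hne)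
                simp at this; omega
              simp only [pfun]
              apply Finset.sum_eq_zero
              intro a _
              rw [this a]; simp
            rw [hQb]; simp
      have : nB - R.natDegree ≤ (Finset.univ.filter fun y : {y // y ∈ B} => R.eval ↑y ≠ 0).card := by
        rw [card_filter_subtype B (fun u => R.eval u ≠ 0)]
        exact card_filter_eval_ne_zero R hR0 B
      have hcc : (Finset.univ.filter fun y : {y // y ∈ B} => c (x, y) ≠ 0).card
          = (Finset.univ.filter fun y : {y // y ∈ B} => R.eval ↑y ≠ 0).card := by
        congr 1
        apply Finset.filter_congr
        intro y _
        rw [hcol x y]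
      omega
    have hge : 2 * T.card ≤ hammingNorm c := by
      rw [hnorm]
      calc 2 * T.card = ∑ _x ∈ T, 2 := by rw [Finset.sum_const, smul_eq_mul, mul_comm]
        _ ≤ ∑ x ∈ T, (Finset.univ.filter fun y : {y // y ∈ B} => c (x, y) ≠ 0).card :=
            Finset.sum_le_sum hcol2
        _ ≤ _ := Finset.sum_le_sum_of_subset (Finset.subset_univ T)
    omega
  · -- case 1 : top row nonzero
    set T := Finset.univ.filter fun x : {x // x ∈ A} => (Q (nB - 1)).eval ↑x ≠ 0 with hT
    have hTcard : nA - s ≤ T.card := by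
      rw [hT, card_filter_subtype A (fun u => (Q (nB - 1)).eval u ≠ 0)]
      have hdeg : (Q (nB - 1)).natDegree ≤ s := by
        show (pfun (fun a => G (a, nB - 1)) nA).natDegree ≤ s
        rw [pfun_shrink (fun a => G (a, nB - 1)) (by omega : s + 1 ≤ nA)
          (fun a ha => hStop a (by omega))]
        exact le_trans (pfun_natDegree_le _ _) (by omega)
      have := card_filter_eval_ne_zero (Q (nB - 1)) hQtop A
      omega
    have hcol1 : ∀ x ∈ T, 1 ≤ (Finset.univ.filter fun y : {y // y ∈ B} => c (x, y) ≠ 0).card := by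
      intro x hx
      rw [hT, Finset.mem_filter] at hx
      set R := pfun (fun b => (Q b).eval ↑x) nB with hR
      have hR0 : R ≠ 0 := fun h => hx.2 (by
        have := pfun_coeff (fun b => (Q b).eval (↑x : F)) (show nB - 1 < nB by omega)
        rw [← hR, h, coeff_zero] at this; exact this.symm)
      have hRdeg : R.natDegree ≤ nB - 1 := pfun_natDegree_le _ _
      have : nB - R.natDegree ≤ (Finset.univ.filter fun y : {y // y ∈ B} => R.eval ↑y ≠ 0).card := by
        rw [card_filter_subtype B (fun u => R.eval u ≠ 0)]
        exact card_filter_eval_ne_zero R hR0 B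
      have hcc : (Finset.univ.filter fun y : {y // y ∈ B} => c (x, y) ≠ 0).card
          = (Finset.univ.filter fun y : {y // y ∈ B} => R.eval ↑y ≠ 0).card := by
        congr 1
        apply Finset.filter_congr
        intro y _
        rw [hcol x y]
      omega
    have hge : T.card ≤ hammingNorm c := by
      rw [hnorm]
      calc T.card = ∑ _x ∈ T, 1 := by rw [Finset.sum_const, smul_eq_mul, mul_one]
        _ ≤ ∑ x ∈ T, (Finset.univ.filter fun y : {y // y ∈ B} => c (x, y) ≠ 0).card :=
            Finset.sum_le_sum hcol1
        _ ≤ _ := Finset.sum_le_sum_of_subset (Finset.subset_univ T)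
    omega


lemma dist_ub :
    ∃ c ∈ C2 A B (Δc i s B.card), c ≠ 0 ∧ hammingNorm c = A.card - s := by
  set nA := A.card with hnA
  set nB := B.card with hnB
  have hsub := Δc_subset A B i s (by omega) hB hsi
  obtain ⟨S₁, hS₁A, hS₁card⟩ := Finset.exists_subset_card_eq (show s ≤ A.card by omega)
  obtain ⟨β, hβ⟩ := Finset.card_pos.mp (show 0 < nB by omega)
  set g : F[X] := ∏ t ∈ S₁, (X - C t) with hg
  set h : F[X] := ∏ t ∈ B.erase β, (X - C t) with hh
  have hg0 : g ≠ 0 := Finset.prod_ne_zero_iff.mpr fun t _ => X_sub_C_ne_zero t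
  have hh0 : h ≠ 0 := Finset.prod_ne_zero_iff.mpr fun t _ => X_sub_C_ne_zero t
  have hgdeg : g.natDegree = s := by
    rw [hg, Polynomial.natDegree_prod _ _ fun t _ => X_sub_C_ne_zero t]
    simp [hS₁card]
  have hhdeg : h.natDegree = nB - 1 := by
    rw [hh, Polynomial.natDegree_prod _ _ fun t _ => X_sub_C_ne_zero t]
    simp [Finset.card_erase_of_mem hβ, hnB]
  have hgeval : ∀ x : F, (g.eval x ≠ 0 ↔ x ∉ S₁) := by
    intro x
    rw [hg, Polynomial.eval_prod]
    rw [Finset.prod_ne_zero_iff]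
    constructor
    · intro hne hmem
      have := hne x hmem
      simp at this
    · intro hx t ht
      simp only [eval_sub, eval_X, eval_C, sub_ne_zero]
      exact fun hcon => hx (by rw [hcon]; exact ht)
  have hheval : ∀ y : F, y ∈ B → (h.eval y ≠ 0 ↔ y = β) := by
    intro y hy
    rw [hh, Polynomial.eval_prod, Finset.prod_ne_zero_iff]
    constructor
    · intro hne
      by_contra hyβ
      have := hne y (Finset.mem_erase.mpr ⟨hyβ, hy⟩)
      simp at this
    · rintro rfl t ht
      simp only [eval_sub, eval_X, eval_C, sub_ne_zero]
      exact fun hcon => (Finset.mem_erase.mp ht).1 hcon.symm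
  set c : Pt A B → F := fun z => g.eval ↑z.1 * h.eval ↑z.2 with hc
  have hmem : c ∈ C2 A B (Δc i s nB) := by
    rw [mem_C2_iff A B _ hsub]
    refine ⟨fun p => g.coeff p.1 * h.coeff p.2, ?_, ?_⟩
    · intro p hp
      rw [show (fun p : ℕ × ℕ => g.coeff p.1 * h.coeff p.2) p
        = g.coeff p.1 * h.coeff p.2 from rfl] at hp
      rw [mem_Δc_iff]
      have h1 : p.1 ≤ s := by
        by_contra hcon
        apply hp
        rw [Polynomial.coeff_eq_zero_of_natDegree_lt (by omega : g.natDegree < p.1)]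
        ring
      have h2 : p.2 ≤ nB - 1 := by
        by_contra hcon
        apply hp
        rw [Polynomial.coeff_eq_zero_of_natDegree_lt (by omega : h.natDegree < p.2)]
        ring
      omega
    · intro z
      have hpe : ∀ b : ℕ, (pfun (fun a => g.coeff a * h.coeff b) nA).eval (↑z.1 : F)
          = g.eval ↑z.1 * h.coeff b := by
        intro b
        rw [pfun_eval, Polynomial.eval_eq_sum_range' (show g.natDegree < nA by omega) (↑z.1 : F),
          Finset.sum_mul]
        apply Finset.sum_congr rfl
        intro a _
        ring
      rw [hc]
      simp only [← hnA, hpe]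
      rw [Polynomial.eval_eq_sum_range' (show h.natDegree < nB by omega) (↑z.2 : F),
        Finset.mul_sum]
      apply Finset.sum_congr rfl
      intro b _
      ring
  have hnormc : hammingNorm c = nA - s := by
    rw [hammingNorm_eq, card_filter_prod]
    have hcolcard : ∀ x : {x // x ∈ A},
        (Finset.univ.filter fun y : {y // y ∈ B} => c (x, y) ≠ 0).card
          = if g.eval ↑x ≠ 0 then 1 else 0 := by
      intro x
      by_cases hgx : g.eval (↑x : F) ≠ 0
      · rw [if_pos hgx]
        have : (Finset.univ.filter fun y : {y // y ∈ B} => c (x, y) ≠ 0)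
            = (Finset.univ.filter fun y : {y // y ∈ B} => y = ⟨β, hβ⟩) := by
          apply Finset.filter_congr
          intro y _
          rw [hc]
          simp only [mul_ne_zero_iff]
          constructor
          · rintro ⟨-, hy⟩
            exact Subtype.ext ((hheval ↑y y.2).mp hy)
          · rintro rfl
            exact ⟨hgx, (hheval β hβ).mpr rfl⟩
        rw [this, Finset.filter_eq', if_pos (Finset.mem_univ _), Finset.card_singleton]
      · rw [if_neg hgx]
        push_neg at hgx
        rw [Finset.card_eq_zero, Finset.filter_eq_empty_iff]
        intro y _
        rw [hc]
        simp [hgx]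
    simp only [hcolcard]
    rw [← Finset.card_filter, card_filter_subtype A (fun u => g.eval u ≠ 0)]
    have : A.filter (fun u => g.eval u ≠ 0) = A \ S₁ := by
      ext x
      rw [Finset.mem_filter, Finset.mem_sdiff]
      constructor
      · rintro ⟨hxA, hx⟩; exact ⟨hxA, (hgeval x).mp hx⟩
      · rintro ⟨hxA, hx⟩; exact ⟨hxA, (hgeval x).mpr hx⟩
    rw [this, Finset.card_sdiff_of_subset hS₁A, hS₁card]
  refine ⟨c, hmem, ?_, hnormc⟩
  intro hc0
  rw [hc0, hammingNorm_zero] at hnormc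
  omega

lemma dim_eq :
    Module.finrank F (C2 A B (Δc i s B.card)) = (i + 1) * (B.card - 1) + s + 1 := by
  set nA := A.card with hnA
  set nB := B.card with hnB
  have hsub := Δc_subset A B i s (by omega) hB hsi
  have hli : LinearIndependent F (fun p : ↥(Δc i s nB) => ev A B ↑p) := by
    rw [Fintype.linearIndependent_iff]
    intro g hg
    -- extend g to a global coefficient function
    set G : ℕ × ℕ → F := fun p => if h : p ∈ Δc i s nB then g ⟨p, h⟩ else 0 with hG
    have hGsupp : ∀ p, G p ≠ 0 → p ∈ Δc i s nB := by
      intro p hp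
      by_contra h
      rw [hG] at hp
      simp [h] at hp
    have hsum : (∑ p ∈ Δc i s nB, G p • ev A B p) = 0 := by
      rw [← hg, Finset.univ_eq_attach,
        ← Finset.sum_attach (Δc i s nB) (fun p => G p • ev A B p)]
      apply Finset.sum_congr rfl
      intro p _
      rw [hG]
      simp [p.2]
    have hzero : ∀ b < nB, ∀ a < nA, G (a, b) = 0 := by
      intro b hb
      apply pfun_eq_zero_of_eval (fun a => G (a, b)) nA A le_rfl
      intro x hx
      -- from vanishing of the bivariate function
      have hcols : ∀ bb < nB, (pfun (fun a => G (a, bb)) nA).eval x = 0 := by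
        apply pfun_eq_zero_of_eval (fun bb => (pfun (fun a => G (a, bb)) nA).eval x) nB B le_rfl
        intro y hy
        have := congrFun hsum (⟨x, hx⟩, ⟨y, hy⟩)
        rw [sum_ev_eq A B _ hsub G hGsupp] at this
        rw [pfun_eval]
        simpa using this
      exact hcols b hb
    intro p
    have hmem := (Finset.mem_product.mp (hsub p.2))
    rw [Finset.mem_range] at hmem
    have h2 : (↑p : ℕ × ℕ).2 < nB := Finset.mem_range.mp hmem.2
    have := hzero _ h2 _ hmem.1
    have heq : G ↑p = g p := by rw [hG]; simp [p.2]
    rw [← heq]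
    rw [show ((↑p : ℕ × ℕ).1, (↑p : ℕ × ℕ).2) = (↑p : ℕ × ℕ) from rfl] at this
    exact this
  have himg : ev A B '' ↑(Δc i s nB) = Set.range (fun p : ↥(Δc i s nB) => ev A B ↑p) := by
    ext y; simp [Set.mem_range, Subtype.exists]
  rw [C2, himg, finrank_span_eq_card hli, Fintype.card_coe]
  -- cardinality of Δc
  have hdisj : Disjoint (Finset.range (i+1) ×ˢ Finset.range (nB - 1))
      (Finset.range (s+1) ×ˢ ({nB - 1} : Finset ℕ)) := by
    rw [Finset.disjoint_left]
    intro p hp hp'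
    rw [Finset.mem_product, Finset.mem_range, Finset.mem_range] at hp
    rw [Finset.mem_product, Finset.mem_singleton] at hp'
    omega
  rw [Δc, Finset.card_union_of_disjoint hdisj, Finset.card_product, Finset.card_product]
  simp only [Finset.card_range, Finset.card_singleton]
  ring

lemma lrc : IsLRC (C2 A B (Δc i s B.card)) (i + 1) (A.card - i) := by
  set nA := A.card with hnA
  set nB := B.card with hnB
  have hsub := Δc_subset A B i s (by omega) hB hsi
  intro z₀
  refine ⟨Finset.univ.filter fun z => z.2 = z₀.2, by simp, ?_, ?_⟩
  · have : (Finset.univ.filter fun z : Pt A B => z.2 = z₀.2).card = nA := by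
      rw [card_filter_prod A B (fun z => z.2 = z₀.2)]
      have : (Finset.univ.filter fun y : {y // y ∈ B} => y = z₀.2).card = 1 := by
        rw [Finset.filter_eq', if_pos (Finset.mem_univ _), Finset.card_singleton]
      simp only [this]
      rw [Finset.sum_const, smul_eq_mul, mul_one, Finset.card_univ, Fintype.card_coe]
    omega
  · intro c hc hex
    obtain ⟨G, hGsupp, hrep⟩ := (mem_C2_iff A B _ hsub c).mp hc
    set q : F[X] := pfun (fun a => ∑ b ∈ Finset.range nB, G (a, b) * (↑z₀.2 : F) ^ b) nA with hq
    have heval : ∀ x : {x // x ∈ A}, c (x, z₀.2) = q.eval ↑x := by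
      intro x
      rw [hrep (x, z₀.2), hq, pfun_eval]
      simp only [pfun_eval, Finset.sum_mul]
      rw [Finset.sum_comm]
      apply Finset.sum_congr rfl
      intro a _
      apply Finset.sum_congr rfl
      intro b _
      ring
    have hItop : ∀ a b, i < a → G (a, b) = 0 := by
      intro a b h
      by_contra hne
      have := (mem_Δc_iff i s nB _).mp (hGsupp _ hne)
      simp at this; omega
    have hqdeg : q.natDegree ≤ i := by
      rw [hq, pfun_shrink _ (by omega : i + 1 ≤ nA) (fun a ha => ?_)]
      · exact le_trans (pfun_natDegree_le _ _) (by omega)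
      · apply Finset.sum_eq_zero
        intro b _
        rw [hItop a b (by omega)]
        ring
    have hq0 : q ≠ 0 := by
      obtain ⟨z₁, hz₁R, hz₁⟩ := hex
      rw [Finset.mem_filter] at hz₁R
      intro h0
      apply hz₁
      have : z₁ = (z₁.1, z₀.2) := by rw [← hz₁R.2]
      rw [this, heval z₁.1, h0, eval_zero]
    -- count nonzero positions
    have hcount : ((Finset.univ.filter fun z : Pt A B => z.2 = z₀.2).filter
          fun z => c z ≠ 0).card
        = (A.filter fun u => q.eval u ≠ 0).card := by
      rw [Finset.filter_filter, card_filter_prod A B (fun z => z.2 = z₀.2 ∧ c z ≠ 0)]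
      have hin : ∀ x : {x // x ∈ A},
          (Finset.univ.filter fun y : {y // y ∈ B} => y = z₀.2 ∧ c (x, y) ≠ 0).card
            = if q.eval ↑x ≠ 0 then 1 else 0 := by
        intro x
        by_cases hqx : q.eval (↑x : F) ≠ 0
        · rw [if_pos hqx]
          have : (Finset.univ.filter fun y : {y // y ∈ B} => y = z₀.2 ∧ c (x, y) ≠ 0)
              = (Finset.univ.filter fun y : {y // y ∈ B} => y = z₀.2) := by
            apply Finset.filter_congr
            intro y _
            constructor
            · exact fun hy => hy.1
            · rintro rfl
              exact ⟨rfl, by rw [heval x]; exact hqx⟩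
          rw [this, Finset.filter_eq', if_pos (Finset.mem_univ _), Finset.card_singleton]
        · rw [if_neg hqx]
          push_neg at hqx
          rw [Finset.card_eq_zero, Finset.filter_eq_empty_iff]
          rintro y - ⟨rfl, hy⟩
          exact hy (by rw [heval x, hqx])
      simp only [hin]
      rw [← Finset.card_filter, card_filter_subtype A (fun u => q.eval u ≠ 0)]
    rw [hcount]
    have := card_filter_eval_ne_zero q hq0 A
    omega

theorem core : IsOptimalLRC (C2 A B (Δc i s B.card))
    ((i + 1) * (B.card - 1) + s + 1) (A.card - s) (i + 1) (A.card - i) := by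
  refine ⟨lrc A B i s hA hB hs hsi hi, dim_eq A B i s hA hB hs hsi hi,
    ⟨fun c hc hc0 => dist_lb A B i s hA hB hs hsi hi c hc hc0,
      dist_ub A B i s hA hB hs hsi hi⟩, ?_⟩
  obtain ⟨b, hb⟩ : ∃ b, B.card = b + 2 := ⟨B.card - 2, by omega⟩
  obtain ⟨a, ha⟩ : ∃ a, A.card = i + 2 + a := ⟨A.card - i - 2, by omega⟩
  obtain ⟨t, ht⟩ : ∃ t, i = s + t + 1 := ⟨i - s - 1, by omega⟩
  have hcard : Fintype.card (Pt A B) = A.card * B.card := by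
    rw [Fintype.card_prod, Fintype.card_coe, Fintype.card_coe]
  rw [hcard, hb, ha]
  have hdiv : ((i + 1) * (b + 2 - 1) + s + 1 + (i + 1) - 1) / (i + 1) = b + 2 := by
    have h1 : (i + 1) * (b + 2 - 1) + s + 1 + (i + 1) - 1 = (i + 1) * (b + 2) + s := by
      have : (i + 1) * (b + 2) = (i + 1) * (b + 1) + (i + 1) := by ring
      rw [this]
      have hX : b + 2 - 1 = b + 1 := by omega
      rw [hX]
      generalize (i + 1) * (b + 1) = X
      omega
    rw [h1, Nat.mul_add_div (by omega), Nat.div_eq_of_lt (by omega)]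
  rw [hdiv]
  have e1 : b + 2 - 1 = b + 1 := by omega
  have e2 : i + 2 + a - s = t + a + 3 := by omega
  have e3 : i + 2 + a - i = a + 2 := by omega
  have e4 : b + 2 - 1 = b + 1 := by omega
  rw [e1, e2, e3]
  have e5 : a + 2 - 1 = a + 1 := by omega
  rw [e5, ht]
  ring

end Core


lemma hammingNorm_comp_equiv {ι κ : Type*} [Fintype ι] [Fintype κ] [DecidableEq ι]
    [DecidableEq κ] (c : κ → F) (e : ι ≃ κ) : hammingNorm (c ∘ e) = hammingNorm c := by
  show (Finset.univ.filter fun z : ι => c (e z) ≠ 0).card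
    = (Finset.univ.filter fun z : κ => c z ≠ 0).card
  apply Finset.card_equiv e
  intro z
  simp

lemma isOptimalLRC_map {ι κ : Type*} [Fintype ι] [Fintype κ] [DecidableEq ι] [DecidableEq κ]
    (e : ι ≃ κ) (C : Submodule F (κ → F)) (k d r δ : ℕ)
    (h : IsOptimalLRC C k d r δ) :
    IsOptimalLRC (Submodule.map (LinearEquiv.funCongrLeft F F e).toLinearMap C) k d r δ := by
  obtain ⟨hlrc, hrank, ⟨hmin1, hmin2⟩, heq⟩ := h
  have hmem : ∀ c, c ∈ Submodule.map (LinearEquiv.funCongrLeft F F e).toLinearMap C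
      ↔ ∃ c' ∈ C, c = c' ∘ e := by
    intro c
    rw [Submodule.mem_map]
    constructor
    · rintro ⟨c', hc', rfl⟩; exact ⟨c', hc', rfl⟩
    · rintro ⟨c', hc', rfl⟩; exact ⟨c', hc', rfl⟩
  refine ⟨?_, ?_, ⟨?_, ?_⟩, ?_⟩
  · -- IsLRC
    intro i
    obtain ⟨R, hiR, hRcard, hRcond⟩ := hlrc (e i)
    refine ⟨R.image e.symm, Finset.mem_image.mpr ⟨e i, hiR, by simp⟩, ?_, ?_⟩
    · rw [Finset.card_image_of_injective _ e.symm.injective]; exact hRcard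
    · intro c hc hex
      obtain ⟨c', hc', rfl⟩ := (hmem c).mp hc
      have hcc : ∀ j : ι, (c' ∘ e) j = c' (e j) := fun _ => rfl
      have hex' : ∃ j ∈ R, c' j ≠ 0 := by
        obtain ⟨j, hjR, hj⟩ := hex
        obtain ⟨j₀, hj₀R, rfl⟩ := Finset.mem_image.mp hjR
        refine ⟨j₀, hj₀R, ?_⟩
        simpa using hj
      have hcard : ((R.image e.symm).filter fun j => (c' ∘ e) j ≠ 0).card
          = (R.filter fun j => c' j ≠ 0).card := by
        apply Finset.card_nbij' (fun j => e j) (fun j => e.symm j)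
        · intro a ha
          rw [Finset.mem_coe, Finset.mem_filter] at ha ⊢
          obtain ⟨haR, hane⟩ := ha
          obtain ⟨j₀, hj₀R, rfl⟩ := Finset.mem_image.mp haR
          exact ⟨by simpa using hj₀R, by simpa using hane⟩
        · intro b hb
          rw [Finset.mem_coe, Finset.mem_filter] at hb ⊢
          exact ⟨Finset.mem_image.mpr ⟨b, hb.1, rfl⟩, by simpa using hb.2⟩
        · intro a _; simp
        · intro b _; simp
      rw [hcard]
      exact hRcond c' hc' hex'
  · rw [LinearEquiv.finrank_map_eq (LinearEquiv.funCongrLeft F F e) C]; exact hrank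
  · intro c hc hc0
    obtain ⟨c', hc', rfl⟩ := (hmem c).mp hc
    have hc'0 : c' ≠ 0 := by
      rintro rfl; exact hc0 rfl
    rw [hammingNorm_comp_equiv c' e]
    exact hmin1 c' hc' hc'0
  · obtain ⟨c', hc', hc'0, hc'n⟩ := hmin2
    refine ⟨c' ∘ e, (hmem _).mpr ⟨c', hc', rfl⟩, ?_, by rw [hammingNorm_comp_equiv c' e]; exact hc'n⟩
    intro hcomp
    apply hc'0
    funext x
    have := congrFun hcomp (e.symm x)
    simpa using this
  · rw [Fintype.card_congr e.symm] at heq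
    exact heq

lemma image_swap (X Y : Finset ℕ) :
    (X ×ˢ Y).image (fun p : ℕ × ℕ => ![p.2, p.1]) =
      (Y ×ˢ X).image (fun p : ℕ × ℕ => ![p.1, p.2]) := by
  ext z
  simp only [Finset.mem_image, Finset.mem_product]
  constructor
  · rintro ⟨p, ⟨h1, h2⟩, rfl⟩; exact ⟨(p.2, p.1), ⟨h2, h1⟩, rfl⟩
  · rintro ⟨p, ⟨h1, h2⟩, rfl⟩; exact ⟨(p.2, p.1), ⟨h2, h1⟩, rfl⟩


end MCCAux

open MCCAux

/-- For `max{0, 2i-n₁} ≤ s < i ≤ n₁-2`, the monomial-Cartesian code on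
`Δ²_{i,s}` is an optimal `(i+1, n₁-i)`-LRC with dimension `(i+1)(n₂-1)+s+1` and minimum
distance `n₁-s`; symmetrically for `max{0, 2j-n₂} ≤ s' < j ≤ n₂-2` and `Δ²σ_{j,s'}`, with
locality `(j+1, n₂-j)`, dimension `(j+1)(n₁-1)+s'+1` and minimum distance `n₂-s'`. -/
theorem mcc_rectelim_optimal
    {F : Type*} [Field F] [Fintype F] [DecidableEq F]
    (P : Fin 2 → Finset F) (hP : ∀ j, 2 ≤ (P j).card)
    (i s : ℕ) (hs : 2 * i - (P 0).card ≤ s) (hsi : s < i) (hi : i ≤ (P 0).card - 2)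
    (j s' : ℕ) (hs' : 2 * j - (P 1).card ≤ s') (hsj : s' < j) (hj : j ≤ (P 1).card - 2) :
    IsOptimalLRC (MCC P (Δ2 i s (P 1).card))
      ((i + 1) * ((P 1).card - 1) + s + 1) ((P 0).card - s) (i + 1) ((P 0).card - i) ∧
    IsOptimalLRC (MCC P (Δ2σ j s' (P 0).card))
      ((j + 1) * ((P 0).card - 1) + s' + 1) ((P 1).card - s') (j + 1) ((P 1).card - j) := by
  constructor
  · -- first statement
    set e₁ : MCCPt P ≃ Pt (P 0) (P 1) := piFinTwoEquiv fun j => {x // x ∈ P j} with he₁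
    have hMCC : MCC P (Δ2 i s (P 1).card)
        = Submodule.map (LinearEquiv.funCongrLeft F F e₁).toLinearMap
            (C2 (P 0) (P 1) (Δc i s (P 1).card)) := by
      rw [MCC, C2, Submodule.map_span]
      congr 1
      have hΔ : Δ2 i s (P 1).card = (Δc i s (P 1).card).image (fun p => ![p.1, p.2]) := by
        rw [Δ2, Δc, Finset.image_union]
      rw [hΔ, Finset.coe_image, Set.image_image, Set.image_image]
      apply Set.image_congr
      intro p _
      funext x
      show (x 0 : F) ^ (![p.1, p.2] 0) * ((x 1 : F) ^ (![p.1, p.2] 1) * 1)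
        = ((e₁ x).1 : F) ^ p.1 * ((e₁ x).2 : F) ^ p.2
      simp [he₁, ev, piFinTwoEquiv]
    rw [hMCC]
    exact isOptimalLRC_map e₁ _ _ _ _ _
      (core (P 0) (P 1) i s (hP 0) (hP 1) hs hsi hi)
  · -- second (symmetric) statement
    set e₂ : MCCPt P ≃ Pt (P 1) (P 0) :=
      (piFinTwoEquiv fun j => {x // x ∈ P j}).trans (Equiv.prodComm _ _) with he₂
    have hMCC : MCC P (Δ2σ j s' (P 0).card)
        = Submodule.map (LinearEquiv.funCongrLeft F F e₂).toLinearMap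
            (C2 (P 1) (P 0) (Δc j s' (P 0).card)) := by
      rw [MCC, C2, Submodule.map_span]
      congr 1
      have hΔ : Δ2σ j s' (P 0).card = (Δc j s' (P 0).card).image (fun p => ![p.2, p.1]) := by
        rw [Δ2σ, Δc, Finset.image_union, image_swap, image_swap]
      rw [hΔ, Finset.coe_image, Set.image_image, Set.image_image]
      apply Set.image_congr
      intro p _
      funext x
      show (x 0 : F) ^ (![p.2, p.1] 0) * ((x 1 : F) ^ (![p.2, p.1] 1) * 1)
        = ((e₂ x).1 : F) ^ p.1 * ((e₂ x).2 : F) ^ p.2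
      simp [he₂, ev, piFinTwoEquiv]
      ring
    rw [hMCC]
    exact isOptimalLRC_map e₂ _ _ _ _ _
      (core (P 1) (P 0) j s' (hP 1) (hP 0) hs' hsj hj)
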